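/- arXiv:1907.01147 — 2 statements merged into one kernel-verified Lean document; each statement's English description precedes it below -/
import Mathlib

section
/- Let H be a complex Hilbert space, (u_n)_{n≥1} an orthonormal (Hilbert) basis of H, T a bounded bijective linear operator on H, and set g_n := T u_n (so (g_n) is a Riesz basis for H). Let (g̃_n)_{n≥1} be a sequence in H biorthogonal to (g_n) (⟨g_m, g̃_n⟩ = 1 if m = n and 0 otherwise) such that every f ∈ H satisfies f = Σ_{n=1}^∞ ⟨f, g̃_n⟩ g_n with convergence in H. Let (e_n)_{n≥1} be a frame for H, let β ∈ (0,1], γ > 0, C > 0 with |⟨e_m, g_n⟩| ≤ C·e^{−γ|m−n|^β} and |⟨e_m, g̃_n⟩| ≤ C·e^{−γ|m−n|^β} for all m, n. Let μ be a β_μ-sub-exponential weight with β_μ < β and μ(n) ≥ 1 for all n ∈ ℕ, and let p ∈ [1,∞). Then there exists K > 0 such that for every square-summable complex sequence (c_n)_{n≥1} with Σ_n |c_n|^p μ(n)^p < ∞: the series Σ_{n=1}^∞ c_n e_n converges in H to some element y, and Σ_m |⟨y, g̃_m⟩|^p μ(m)^p ≤ K^p · Σ_n |c_n|^p μ(n)^p.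 That is, the synthesis operator T_E maps ℓ^p_μ boundedly into H_G^{ℓ^p_μ}. -/
section Aux
open MeasureTheory ENNReal in
lemma jensenE (w x : ℕ → ℝ≥0∞) {p : ℝ} (hp : 1 ≤ p) :
    (∑' n, w n * x n) ^ p ≤ (∑' n, w n) ^ (p - 1) * ∑' n, w n * x n ^ p := by
  rcases eq_or_lt_of_le hp with h1 | h1
  · simp [← h1]
  · have hpq : p.HolderConjugate (Real.conjExponent p) := Real.HolderConjugate.conjExponent h1
    set q := Real.conjExponent p with hq
    have hp0 : (0:ℝ) ≤ p := le_trans zero_le_one hp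
    have holder := ENNReal.lintegral_mul_le_Lp_mul_Lq (Measure.count : Measure ℕ) hpq
      (f := fun n => w n ^ (1/p) * x n) (g := fun n => w n ^ (1/q))
      (measurable_of_countable _).aemeasurable (measurable_of_countable _).aemeasurable
    rw [lintegral_count, lintegral_count, lintegral_count] at holder
    have key : (∑' n, w n * x n)
        ≤ (∑' n, w n * x n ^ p) ^ (1/p) * (∑' n, w n) ^ (1/q) := by
      have e1 : ∀ n, ((fun n => w n ^ (1/p) * x n) * fun n => w n ^ (1/q)) n = w n * x n := by
        intro n
        simp only [Pi.mul_apply]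
        rw [mul_right_comm, ← ENNReal.rpow_add_of_nonneg _ _ (by positivity) (one_div_nonneg.mpr hpq.symm.nonneg)]
        rw [one_div, one_div, hpq.inv_add_inv_eq_one, ENNReal.rpow_one]
      have e2 : ∀ n, (w n ^ (1/p) * x n) ^ p = w n * x n ^ p := by
        intro n
        rw [ENNReal.mul_rpow_of_nonneg _ _ hp0, ← ENNReal.rpow_mul,
          one_div_mul_cancel hpq.ne_zero, ENNReal.rpow_one]
      have e3 : ∀ n, (w n ^ (1/q)) ^ q = w n := by
        intro n
        rw [← ENNReal.rpow_mul, one_div_mul_cancel hpq.symm.ne_zero, ENNReal.rpow_one]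
      calc (∑' n, w n * x n) = ∑' n, ((fun n => w n ^ (1/p) * x n) * fun n => w n ^ (1/q)) n := by
            rw [tsum_congr e1]
        _ ≤ (∑' n, (w n ^ (1/p) * x n) ^ p) ^ (1/p) * (∑' n, (w n ^ (1/q)) ^ q) ^ (1/q) := holder
        _ = (∑' n, w n * x n ^ p) ^ (1/p) * (∑' n, w n) ^ (1/q) := by
            rw [tsum_congr e2, tsum_congr e3]
    calc (∑' n, w n * x n) ^ p
        ≤ ((∑' n, w n * x n ^ p) ^ (1/p) * (∑' n, w n) ^ (1/q)) ^ p :=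
          ENNReal.rpow_le_rpow key hp0
      _ = (∑' n, w n) ^ (p - 1) * ∑' n, w n * x n ^ p := by
          rw [ENNReal.mul_rpow_of_nonneg _ _ hp0, ← ENNReal.rpow_mul, ← ENNReal.rpow_mul,
            one_div_mul_cancel hpq.ne_zero, ENNReal.rpow_one]
          have : 1 / q * p = p - 1 := by rw [one_div, inv_mul_eq_div, hpq.div_conj_eq_sub_one]
          rw [this, mul_comm]

lemma kernel_summable {δ β : ℝ} (hδ : 0 < δ) (hβ : 0 < β) :
    Summable (fun k : ℕ => Real.exp (-δ * (k:ℝ) ^ β)) := by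
  rw [← summable_nat_add_iff 1]
  set N : ℕ := ⌈2/β⌉₊ with hN
  have hNβ : 2 ≤ (N:ℝ) * β := by
    have h1 : 2/β ≤ (N:ℝ) := Nat.le_ceil _
    calc (2:ℝ) = (2/β) * β := by field_simp
      _ ≤ (N:ℝ) * β := by nlinarith
  have hsum2 : Summable (fun k : ℕ => ((N.factorial : ℝ)/δ^N) * (1/((k:ℝ)+1)^2)) := by
    apply Summable.mul_left
    have := (summable_nat_add_iff (f := fun n : ℕ => 1/(n:ℝ)^2) 1).mpr
      (Real.summable_one_div_nat_pow.mpr one_lt_two)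
    convert this using 2 with k
    case e'_3 => rfl
    push_cast
    ring_nf
  apply Summable.of_nonneg_of_le (fun k => Real.exp_nonneg _) _ hsum2
  intro k
  set x : ℝ := (k:ℝ) + 1 with hx
  have hx1 : (1:ℝ) ≤ x := by simp [hx]
  have hx0 : (0:ℝ) < x := lt_of_lt_of_le one_pos hx1
  have hlow : δ^N * x^2 / N.factorial ≤ Real.exp (δ * x ^ β) := by
    have h1 := Real.pow_div_factorial_le_exp (x := δ * x ^ β) (by positivity) N
    have h2 : (δ * x ^ β)^N = δ^N * (x ^ β)^(N:ℕ) := by ring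
    have h3 : (x ^ β)^(N:ℕ) = x ^ (β * (N:ℝ)) := by
      rw [← Real.rpow_natCast (x ^ β) N, ← Real.rpow_mul (le_of_lt hx0)]
    have h4 : x ^ (2:ℝ) ≤ x ^ (β * (N:ℝ)) :=
      Real.rpow_le_rpow_of_exponent_le hx1 (by linarith)
    have h5 : x ^ (2:ℝ) = x ^ (2:ℕ) := by
      rw [← Real.rpow_natCast x 2]; norm_num
    calc δ^N * x^2 / N.factorial = δ^N * (x ^ (2:ℝ)) / N.factorial := by rw [h5]
      _ ≤ δ^N * (x ^ (β * (N:ℝ))) / N.factorial := by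
          have : (0:ℝ) < N.factorial := by positivity
          gcongr
      _ = (δ * x ^ β)^N / N.factorial := by rw [h2, h3]
      _ ≤ Real.exp (δ * x ^ β) := h1
  have hpos : (0:ℝ) < δ^N * x^2 / N.factorial := by positivity
  have : Real.exp (-δ * (((k:ℕ):ℝ)+1) ^ β) = (Real.exp (δ * x ^ β))⁻¹ := by
    rw [← Real.exp_neg, hx]; ring_nf
  calc Real.exp (-δ * (((k:ℕ)+1:ℕ):ℝ) ^ β) = (Real.exp (δ * x ^ β))⁻¹ := by
        rw [← Real.exp_neg, hx]; push_cast; ring_nf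
    _ ≤ (δ^N * x^2 / N.factorial)⁻¹ := by
        exact inv_anti₀ hpos hlow
    _ = (N.factorial : ℝ)/δ^N * (1/x^2) := by field_simp

lemma exp_compare {β βμ δ γ' : ℝ} (hδ : 0 < δ) (hβμ : 0 < βμ) (hβμβ : βμ < β)
    (hγ' : 0 < γ') :
    ∃ M : ℝ, 0 ≤ M ∧ ∀ t : ℝ, γ' * |t| ^ βμ ≤ δ * |t| ^ β + M := by
  set R : ℝ := max 1 ((γ'/δ) ^ (1/(β - βμ))) with hR
  have hR1 : (1:ℝ) ≤ R := le_max_left _ _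
  refine ⟨γ' * R ^ βμ, by positivity, fun t => ?_⟩
  rcases le_total |t| R with h | h
  · have h1 : γ' * |t|^βμ ≤ γ' * R^βμ := by
      exact mul_le_mul_of_nonneg_left (Real.rpow_le_rpow (abs_nonneg t) h hβμ.le) hγ'.le
    have h2 : 0 ≤ δ * |t| ^ β := by positivity
    linarith
  · have ht1 : (1:ℝ) ≤ |t| := le_trans hR1 h
    have ht0 : (0:ℝ) < |t| := lt_of_lt_of_le one_pos ht1
    have key : γ'/δ ≤ |t| ^ (β - βμ) := by
      have h3 : (γ'/δ) ^ (1/(β-βμ)) ≤ |t| := le_trans (le_max_right _ _) h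
      have h2 := Real.rpow_le_rpow (by positivity) h3 (by linarith : (0:ℝ) ≤ β - βμ)
      rwa [← Real.rpow_mul (by positivity),
        one_div_mul_cancel (by linarith : β - βμ ≠ 0), Real.rpow_one] at h2
    have hmain : γ' * |t|^βμ ≤ δ * |t|^β := by
      have h4 : γ' * |t|^βμ = δ * (γ'/δ) * |t|^βμ := by field_simp
      have h5 : δ * (γ'/δ) * |t|^βμ ≤ δ * |t|^(β-βμ) * |t|^βμ := by
        have hβμpos : (0:ℝ) ≤ |t|^βμ := by positivity
        exact mul_le_mul_of_nonneg_right (mul_le_mul_of_nonneg_left key hδ.le) hβμpos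
      have h6 : δ * |t|^(β-βμ) * |t|^βμ = δ * |t|^β := by
        rw [mul_assoc, ← Real.rpow_add ht0]
        ring_nf
      linarith
    have : (0:ℝ) ≤ γ' * R ^ βμ := by positivity
    linarith

lemma row_bound {δ β : ℝ} (m : ℕ) :
    ∑' n : ℕ, ENNReal.ofReal (Real.exp (-δ * |(m:ℝ) - (n:ℝ)| ^ β))
      ≤ 2 * ∑' k : ℕ, ENNReal.ofReal (Real.exp (-δ * (k:ℝ) ^ β)) := by
  set G : ℕ → ENNReal := fun k => ENNReal.ofReal (Real.exp (-δ * (k:ℝ) ^ β)) with hG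
  set Fz : ℤ → ENNReal := fun z => ENNReal.ofReal (Real.exp (-δ * |(z:ℝ)| ^ β)) with hFz
  have step1 : ∑' n : ℕ, ENNReal.ofReal (Real.exp (-δ * |(m:ℝ) - (n:ℝ)| ^ β))
      ≤ ∑' z : ℤ, Fz z := by
    apply ENNReal.summable.tsum_le_tsum_of_inj (fun n : ℕ => (m:ℤ) - n)
      (fun a b hab => by simp only [sub_right_inj, Int.natCast_inj] at hab; exact hab)
      (fun c _ => zero_le) _ ENNReal.summable
    intro n
    simp only [hFz]
    apply le_of_eq
    congr 2
    push_cast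
    ring
  have step2 : ∑' z : ℤ, Fz z = (∑' k : ℕ, Fz k) + ∑' k : ℕ, Fz (-((k:ℤ) + 1)) :=
    tsum_of_nat_of_neg_add_one ENNReal.summable ENNReal.summable
  have step3 : ∑' k : ℕ, Fz (k:ℤ) = ∑' k, G k := by
    apply tsum_congr
    intro k
    simp only [hFz, hG]
    congr 2
    rw [Int.cast_natCast, abs_of_nonneg (by positivity : (0:ℝ) ≤ (k:ℝ))]
  have step4 : ∑' k : ℕ, Fz (-((k:ℤ) + 1)) ≤ ∑' k, G k := by
    have h2 : ∀ k : ℕ, Fz (-((k:ℤ) + 1)) = G (k + 1) := by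
      intro k
      simp only [hFz, hG]
      congr 2
      push_cast
      rw [abs_neg, abs_of_nonneg (by positivity : (0:ℝ) ≤ (k:ℝ)+1)]
    rw [tsum_congr h2]
    exact ENNReal.tsum_comp_le_tsum_of_injective (add_left_injective 1) G
  calc ∑' n : ℕ, ENNReal.ofReal (Real.exp (-δ * |(m:ℝ) - (n:ℝ)| ^ β))
      ≤ ∑' z : ℤ, Fz z := step1
    _ = (∑' k : ℕ, Fz k) + ∑' k : ℕ, Fz (-((k:ℤ) + 1)) := step2
    _ ≤ (∑' k, G k) + ∑' k, G k := by rw [step3]; gcongr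
    _ = 2 * ∑' k, G k := (two_mul _).symm

lemma row_summable {δ β : ℝ} (hδ : 0 < δ) (hβ : 0 < β) (m : ℕ) :
    Summable (fun n : ℕ => Real.exp (-δ * |(m:ℝ) - (n:ℝ)| ^ β)) := by
  apply (summable_nat_add_iff m).mp
  have : (fun n : ℕ => Real.exp (-δ * |(m:ℝ) - ((n + m : ℕ):ℝ)| ^ β))
      = fun n : ℕ => Real.exp (-δ * (n:ℝ) ^ β) := by
    funext n
    congr 2
    push_cast
    rw [show (m:ℝ) - ((n:ℝ) + (m:ℝ)) = -(n:ℝ) by ring, abs_neg,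
      abs_of_nonneg (by positivity : (0:ℝ) ≤ (n:ℝ))]
  rw [this]
  exact kernel_summable hδ hβ

end Aux

open scoped ENNReal

/-- Synthesis operator boundedness: if a frame `(e_n)` is `β`-sub-exponentially (or
exponentially) localized with respect to a Riesz basis `(g_n)` with canonical dual
`(g̃_n)`, and `μ` is a `β_μ`-sub-exponential weight with `β_μ < β` and `μ(n) ≥ 1`,
then the synthesis operator `(c_n) ↦ Σ c_n e_n` maps `ℓ^p_μ` boundedly into
`H_G^{ℓ^p_μ}`. -/
theorem stmt_17 {H : Type*} [NormedAddCommGroup H] [InnerProductSpace ℂ H]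
    [CompleteSpace H]
    (u : HilbertBasis ℕ ℂ H) (T : H →L[ℂ] H) (hT : Function.Bijective T)
    (g : ℕ → H) (hg : ∀ n, g n = T (u n))
    (gd : ℕ → H)
    (hbi : ∀ m n : ℕ, (inner ℂ (g m) (gd n) : ℂ) = if m = n then 1 else 0)
    (hexp : ∀ f : H, HasSum (fun n : ℕ => (inner ℂ f (gd n) : ℂ) • g n) f)
    (e : ℕ → H)
    (hframe : ∃ A B : ℝ, 0 < A ∧ A ≤ B ∧ ∀ f : H,
      Summable (fun n : ℕ => ‖(inner ℂ f (e n) : ℂ)‖ ^ 2) ∧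
      A * ‖f‖ ^ 2 ≤ ∑' n : ℕ, ‖(inner ℂ f (e n) : ℂ)‖ ^ 2 ∧
      ∑' n : ℕ, ‖(inner ℂ f (e n) : ℂ)‖ ^ 2 ≤ B * ‖f‖ ^ 2)
    (β γ C : ℝ) (hβ₀ : 0 < β) (hβ₁ : β ≤ 1) (hγ : 0 < γ) (hC : 0 < C)
    (hloc1 : ∀ m n : ℕ,
      ‖(inner ℂ (e m) (g n) : ℂ)‖ ≤ C * Real.exp (-γ * |(m:ℝ) - (n:ℝ)| ^ β))
    (hloc2 : ∀ m n : ℕ,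
      ‖(inner ℂ (e m) (gd n) : ℂ)‖ ≤ C * Real.exp (-γ * |(m:ℝ) - (n:ℝ)| ^ β))
    (μ : ℝ → ℝ) (hμpos : ∀ x, 0 < μ x) (hμcont : Continuous μ)
    (βμ : ℝ) (hβμ₀ : 0 < βμ) (hβμ₁ : βμ < 1) (hβμβ : βμ < β)
    (hsub : ∃ Cμ > (0:ℝ), ∃ γ' > (0:ℝ), ∀ t x : ℝ,
      μ (t + x) ≤ Cμ * Real.exp (γ' * |t| ^ βμ) * μ x)
    (hμ1 : ∀ n : ℕ, 1 ≤ μ ((n:ℝ) + 1))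
    (p : ℝ) (hp : 1 ≤ p) :
    ∃ K > (0:ℝ), ∀ c : ℕ → ℂ,
      Summable (fun n : ℕ => ‖c n‖ ^ 2) →
      Summable (fun n : ℕ => ‖c n‖ ^ p * μ ((n:ℝ) + 1) ^ p) →
      ∃ y : H, HasSum (fun n : ℕ => c n • e n) y ∧
        Summable (fun m : ℕ => ‖(inner ℂ y (gd m) : ℂ)‖ ^ p * μ ((m:ℝ) + 1) ^ p) ∧
        ∑' m : ℕ, ‖(inner ℂ y (gd m) : ℂ)‖ ^ p * μ ((m:ℝ) + 1) ^ p
          ≤ K ^ p * ∑' n : ℕ, ‖c n‖ ^ p * μ ((n:ℝ) + 1) ^ p := by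
  classical
  obtain ⟨A, B, hA, hAB, hfr⟩ := hframe
  obtain ⟨Cμ, hCμ, γ', hγ', hμsub⟩ := hsub
  have hB : 0 < B := lt_of_lt_of_le hA hAB
  have hp0 : (0:ℝ) ≤ p := le_trans zero_le_one hp
  set δ : ℝ := γ / 2 with hδdef
  have hδ : 0 < δ := by positivity
  obtain ⟨M, hM0, hMle⟩ := exp_compare hδ hβμ₀ hβμβ hγ'
  have hGsum : Summable (fun k : ℕ => Real.exp (-δ * (k:ℝ) ^ β)) := kernel_summable hδ hβ₀
  set W : ℝ≥0∞ := 2 * ∑' k : ℕ, ENNReal.ofReal (Real.exp (-δ * (k:ℝ) ^ β)) with hWdef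
  have hWne : W ≠ ⊤ := by
    rw [hWdef, ← ENNReal.ofReal_tsum_of_nonneg (fun k => Real.exp_nonneg _) hGsum]
    exact ENNReal.mul_ne_top (by norm_num) ENNReal.ofReal_ne_top
  have h1le : 1 ≤ ∑' k : ℕ, ENNReal.ofReal (Real.exp (-δ * (k:ℝ)^β)) := by
    refine le_trans (le_of_eq ?_)
      (ENNReal.le_tsum (f := fun k : ℕ => ENNReal.ofReal (Real.exp (-δ * (k:ℝ)^β))) 0)
    have h0 : ((0:ℕ):ℝ) ^ β = 0 := by rw [Nat.cast_zero, Real.zero_rpow hβ₀.ne']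
    rw [h0, mul_zero, Real.exp_zero, ENNReal.ofReal_one]
  have hW0 : W ≠ 0 := by
    rw [hWdef]
    refine mul_ne_zero (by norm_num) ?_
    intro h
    rw [h] at h1le
    exact (by norm_num : ¬ (1:ℝ≥0∞) ≤ 0) h1le
  set L : ℝ := C * Cμ * Real.exp M with hLdef
  have hL0 : 0 < L := by positivity
  have hWtR : 0 < W.toReal := ENNReal.toReal_pos hW0 hWne
  refine ⟨L * W.toReal, by positivity, fun c hc2 hcp => ?_⟩
  set K : ℝ := L * W.toReal with hKdef
  -- Step A : convergence
  have hsq : ∀ s : Finset ℕ, ‖∑ n ∈ s, c n • e n‖^2 ≤ B * ∑ n ∈ s, ‖c n‖^2 := by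
    intro s
    set v : H := ∑ n ∈ s, c n • e n with hv
    rcases eq_or_ne v 0 with hv0 | hv0
    · rw [hv0]
      simp only [norm_zero]
      have : (0:ℝ) ≤ ∑ n ∈ s, ‖c n‖^2 := Finset.sum_nonneg fun n _ => by positivity
      nlinarith
    · have hinner : (inner ℂ v v : ℂ) = ∑ n ∈ s, c n * (inner ℂ v (e n) : ℂ) := by
        calc (inner ℂ v v : ℂ) = inner ℂ v (∑ n ∈ s, c n • e n) := by rw [← hv]
          _ = ∑ n ∈ s, (inner ℂ v (c n • e n) : ℂ) := inner_sum s _ v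
          _ = ∑ n ∈ s, c n * (inner ℂ v (e n) : ℂ) := by
              apply Finset.sum_congr rfl
              intro n _
              rw [inner_smul_right]
      have hnormsq : ‖v‖^2 = ‖(inner ℂ v v : ℂ)‖ := by
        rw [@inner_self_eq_norm_sq_to_K ℂ, norm_pow]
        simp
      have hstep1 : ‖v‖^2 ≤ ∑ n ∈ s, ‖c n‖ * ‖(inner ℂ v (e n) : ℂ)‖ := by
        rw [hnormsq, hinner]
        refine le_trans (norm_sum_le s _) (le_of_eq ?_)
        apply Finset.sum_congr rfl
        intro n _
        rw [norm_mul]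
      have hCS : (∑ n ∈ s, ‖c n‖ * ‖(inner ℂ v (e n) : ℂ)‖)^2
          ≤ (∑ n ∈ s, ‖c n‖^2) * ∑ n ∈ s, ‖(inner ℂ v (e n) : ℂ)‖^2 :=
        Finset.sum_mul_sq_le_sq_mul_sq s _ _
      have hfrv := hfr v
      have hsum_le : ∑ n ∈ s, ‖(inner ℂ v (e n) : ℂ)‖^2 ≤ B * ‖v‖^2 :=
        le_trans (hfrv.1.sum_le_tsum s (fun n _ => by positivity)) hfrv.2.2
      have hvpos : (0:ℝ) < ‖v‖^2 := by
        have := norm_pos_iff.mpr hv0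
        positivity
      have hc2nn : (0:ℝ) ≤ ∑ n ∈ s, ‖c n‖^2 := Finset.sum_nonneg fun n _ => by positivity
      have h4 : (‖v‖^2)^2 ≤ (∑ n ∈ s, ‖c n‖^2) * (B * ‖v‖^2) := by
        calc (‖v‖^2)^2 ≤ (∑ n ∈ s, ‖c n‖ * ‖(inner ℂ v (e n) : ℂ)‖)^2 := by
              apply pow_le_pow_left₀ (by positivity) hstep1
          _ ≤ (∑ n ∈ s, ‖c n‖^2) * ∑ n ∈ s, ‖(inner ℂ v (e n) : ℂ)‖^2 := hCS
          _ ≤ (∑ n ∈ s, ‖c n‖^2) * (B * ‖v‖^2) := by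
              exact mul_le_mul_of_nonneg_left hsum_le hc2nn
      have := le_of_mul_le_mul_right (by nlinarith : ‖v‖^2 * ‖v‖^2 ≤ (B * ∑ n ∈ s, ‖c n‖^2) * ‖v‖^2) hvpos
      linarith
  have hsummable : Summable (fun n : ℕ => c n • e n) := by
    rw [summable_iff_vanishing]
    intro U hU
    obtain ⟨ε, hε, hball⟩ := Metric.mem_nhds_iff.mp hU
    obtain ⟨s, hs⟩ := summable_iff_vanishing.mp hc2 (Metric.ball 0 (ε^2/B))
      (Metric.ball_mem_nhds 0 (by positivity))
    refine ⟨s, fun t ht => ?_⟩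
    have h1 := hs t ht
    rw [Metric.mem_ball, dist_zero_right, Real.norm_eq_abs] at h1
    have h2 : ∑ n ∈ t, ‖c n‖^2 < ε^2/B := lt_of_le_of_lt (le_abs_self _) h1
    apply hball
    rw [Metric.mem_ball, dist_zero_right]
    have h3 : ‖∑ n ∈ t, c n • e n‖^2 < ε^2 := by
      refine lt_of_le_of_lt (hsq t) ?_
      rw [show ε^2 = B * (ε^2/B) by field_simp]
      exact mul_lt_mul_of_pos_left h2 hB
    exact lt_of_pow_lt_pow_left₀ 2 hε.le h3
  obtain ⟨y, hy⟩ := hsummable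
  refine ⟨y, hy, ?_⟩
  -- Step B : pointwise coefficient bound
  set Φ : ℕ → ℕ → ℝ := fun m n => ‖c n‖ * (C * Real.exp (-γ * |(n:ℝ) - (m:ℝ)| ^ β)) with hΦdef
  set A₀ : ℝ := Real.sqrt (∑' n, ‖c n‖^2) with hA₀
  have hcbd : ∀ n, ‖c n‖ ≤ A₀ := by
    intro n
    rw [hA₀, ← Real.sqrt_sq (norm_nonneg (c n))]
    exact Real.sqrt_le_sqrt (hc2.le_tsum n (fun j _ => by positivity))
  have hA₀0 : 0 ≤ A₀ := Real.sqrt_nonneg _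
  have hΦle : ∀ m n, Φ m n ≤ (A₀ * C) * Real.exp (-γ * |(m:ℝ) - (n:ℝ)| ^ β) := by
    intro m n
    rw [hΦdef]
    simp only []
    rw [abs_sub_comm ((n:ℝ)) ((m:ℝ))]
    have := hcbd n
    have hE : (0:ℝ) ≤ Real.exp (-γ * |(m:ℝ) - (n:ℝ)| ^ β) := Real.exp_nonneg _
    calc ‖c n‖ * (C * Real.exp (-γ * |(m:ℝ) - (n:ℝ)| ^ β))
        ≤ A₀ * (C * Real.exp (-γ * |(m:ℝ) - (n:ℝ)| ^ β)) := by
          exact mul_le_mul_of_nonneg_right this (by positivity)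
      _ = (A₀ * C) * Real.exp (-γ * |(m:ℝ) - (n:ℝ)| ^ β) := by ring
  have hΦsum : ∀ m, Summable (Φ m) := by
    intro m
    exact Summable.of_nonneg_of_le
      (fun n => by rw [hΦdef]; positivity)
      (hΦle m) ((row_summable hγ hβ₀ m).mul_left (A₀ * C))
  have hIm : ∀ m, ‖(inner ℂ y (gd m) : ℂ)‖ ≤ ∑' n, Φ m n := by
    intro m
    have hgdsum : HasSum (fun n => (inner ℂ (gd m) (c n • e n) : ℂ)) (inner ℂ (gd m) y : ℂ) := by
      have := (innerSL ℂ (gd m)).hasSum hy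
      simpa [inner_smul_right] using this
    have hle : ∀ n, ‖(inner ℂ (gd m) (c n • e n) : ℂ)‖ ≤ Φ m n := by
      intro n
      rw [inner_smul_right, norm_mul, hΦdef]
      simp only []
      gcongr
      rw [← norm_inner_symm]
      exact hloc2 n m
    have hnorms : Summable (fun n => ‖(inner ℂ (gd m) (c n • e n) : ℂ)‖) :=
      Summable.of_nonneg_of_le (fun n => norm_nonneg _) hle (hΦsum m)
    calc ‖(inner ℂ y (gd m) : ℂ)‖ = ‖(inner ℂ (gd m) y : ℂ)‖ := norm_inner_symm y (gd m)
      _ = ‖∑' n, (inner ℂ (gd m) (c n • e n) : ℂ)‖ := by rw [hgdsum.tsum_eq]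
      _ ≤ ∑' n, ‖(inner ℂ (gd m) (c n • e n) : ℂ)‖ := norm_tsum_le_tsum_norm hnorms
      _ ≤ ∑' n, Φ m n := Summable.tsum_le_tsum hle hnorms (hΦsum m)
  -- Step C : weighted estimate in ℝ≥0∞
  set AA : ℕ → ℝ≥0∞ := fun n => ENNReal.ofReal (‖c n‖ * μ ((n:ℝ)+1)) with hAAdef
  set w2 : ℕ → ℕ → ℝ≥0∞ :=
    fun m n => ENNReal.ofReal (Real.exp (-δ * |(m:ℝ) - (n:ℝ)| ^ β)) with hw2def
  have claim1 : ∀ m, ENNReal.ofReal (‖(inner ℂ y (gd m) : ℂ)‖ * μ ((m:ℝ)+1))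
      ≤ ENNReal.ofReal L * ∑' n, w2 m n * AA n := by
    intro m
    have hμm : 0 ≤ μ ((m:ℝ)+1) := (hμpos _).le
    have hreal : ∀ n, Φ m n * μ ((m:ℝ)+1)
        ≤ L * (Real.exp (-δ * |(m:ℝ)-(n:ℝ)|^β) * (‖c n‖ * μ ((n:ℝ)+1))) := by
      intro n
      have hμw : μ ((m:ℝ)+1) ≤ Cμ * Real.exp (γ' * |(m:ℝ)-(n:ℝ)|^βμ) * μ ((n:ℝ)+1) := by
        have := hμsub ((m:ℝ)-(n:ℝ)) ((n:ℝ)+1)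
        rwa [show (m:ℝ)-(n:ℝ)+((n:ℝ)+1) = (m:ℝ)+1 by ring] at this
      have hkey : C * Real.exp (-γ*|(n:ℝ)-(m:ℝ)|^β) * (Cμ * Real.exp (γ' * |(m:ℝ)-(n:ℝ)|^βμ))
          ≤ L * Real.exp (-δ * |(m:ℝ)-(n:ℝ)|^β) := by
        rw [abs_sub_comm ((n:ℝ)) ((m:ℝ))]
        have h1 : Real.exp (-γ * |(m:ℝ)-(n:ℝ)|^β) * Real.exp (γ' * |(m:ℝ)-(n:ℝ)|^βμ)
            ≤ Real.exp M * Real.exp (-δ * |(m:ℝ)-(n:ℝ)|^β) := by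
          rw [← Real.exp_add, ← Real.exp_add]
          apply Real.exp_le_exp.mpr
          have h2 := hMle ((m:ℝ)-(n:ℝ))
          have hγ2δ : γ = 2 * δ := by rw [hδdef]; ring
          rw [hγ2δ]
          linarith
        calc C * Real.exp (-γ*|(m:ℝ)-(n:ℝ)|^β) * (Cμ * Real.exp (γ' * |(m:ℝ)-(n:ℝ)|^βμ))
            = (C * Cμ) * (Real.exp (-γ*|(m:ℝ)-(n:ℝ)|^β) * Real.exp (γ' * |(m:ℝ)-(n:ℝ)|^βμ)) := by
              ring
          _ ≤ (C * Cμ) * (Real.exp M * Real.exp (-δ * |(m:ℝ)-(n:ℝ)|^β)) := by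
              exact mul_le_mul_of_nonneg_left h1 (by positivity)
          _ = L * Real.exp (-δ * |(m:ℝ)-(n:ℝ)|^β) := by rw [hLdef]; ring
      have hμn : 0 ≤ μ ((n:ℝ)+1) := (hμpos _).le
      calc Φ m n * μ ((m:ℝ)+1)
          = (C * Real.exp (-γ*|(n:ℝ)-(m:ℝ)|^β)) * ‖c n‖ * μ ((m:ℝ)+1) := by
            rw [hΦdef]; ring
        _ ≤ (C * Real.exp (-γ*|(n:ℝ)-(m:ℝ)|^β)) * ‖c n‖
              * (Cμ * Real.exp (γ' * |(m:ℝ)-(n:ℝ)|^βμ) * μ ((n:ℝ)+1)) := by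
            exact mul_le_mul_of_nonneg_left hμw (by positivity)
        _ = (C * Real.exp (-γ*|(n:ℝ)-(m:ℝ)|^β) * (Cμ * Real.exp (γ' * |(m:ℝ)-(n:ℝ)|^βμ)))
              * (‖c n‖ * μ ((n:ℝ)+1)) := by ring
        _ ≤ (L * Real.exp (-δ * |(m:ℝ)-(n:ℝ)|^β)) * (‖c n‖ * μ ((n:ℝ)+1)) := by
            exact mul_le_mul_of_nonneg_right hkey (by positivity)
        _ = L * (Real.exp (-δ * |(m:ℝ)-(n:ℝ)|^β) * (‖c n‖ * μ ((n:ℝ)+1))) := by ring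
    calc ENNReal.ofReal (‖(inner ℂ y (gd m) : ℂ)‖ * μ ((m:ℝ)+1))
        ≤ ENNReal.ofReal ((∑' n, Φ m n) * μ ((m:ℝ)+1)) :=
          ENNReal.ofReal_le_ofReal (mul_le_mul_of_nonneg_right (hIm m) hμm)
      _ = ENNReal.ofReal (∑' n, Φ m n * μ ((m:ℝ)+1)) := by rw [tsum_mul_right]
      _ = ∑' n, ENNReal.ofReal (Φ m n * μ ((m:ℝ)+1)) :=
          ENNReal.ofReal_tsum_of_nonneg
            (fun n => mul_nonneg (by rw [hΦdef]; positivity) hμm) ((hΦsum m).mul_right _)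
      _ ≤ ∑' n, ENNReal.ofReal L * (w2 m n * AA n) := by
          apply ENNReal.tsum_le_tsum
          intro n
          refine le_trans (ENNReal.ofReal_le_ofReal (hreal n)) (le_of_eq ?_)
          rw [ENNReal.ofReal_mul hL0.le, ENNReal.ofReal_mul (Real.exp_nonneg _)]
      _ = ENNReal.ofReal L * ∑' n, w2 m n * AA n := ENNReal.tsum_mul_left
  have main : ∑' m, ENNReal.ofReal (‖(inner ℂ y (gd m) : ℂ)‖ ^ p * μ ((m:ℝ)+1) ^ p)
      ≤ ENNReal.ofReal (K ^ p * ∑' n : ℕ, ‖c n‖ ^ p * μ ((n:ℝ) + 1) ^ p) := by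
    have hterm : ∀ m, ENNReal.ofReal (‖(inner ℂ y (gd m):ℂ)‖^p * μ ((m:ℝ)+1)^p)
        = (ENNReal.ofReal (‖(inner ℂ y (gd m):ℂ)‖ * μ ((m:ℝ)+1)))^p := by
      intro m
      rw [← Real.mul_rpow (norm_nonneg _) (hμpos _).le,
        ENNReal.ofReal_rpow_of_nonneg (by have := (hμpos ((m:ℝ)+1)).le; positivity) hp0]
    have hrow : ∀ m, ∑' n, w2 m n ≤ W := fun m => row_bound m
    have hcol : ∀ n, ∑' m, w2 m n ≤ W := by
      intro n
      have hcongr : ∀ m, w2 m n = ENNReal.ofReal (Real.exp (-δ * |(n:ℝ) - (m:ℝ)|^β)) := by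
        intro m
        rw [hw2def]
        simp only []
        rw [abs_sub_comm]
      rw [tsum_congr hcongr]
      exact row_bound n
    have hAAp : ∑' n, (AA n)^p
        = ENNReal.ofReal (∑' n : ℕ, ‖c n‖ ^ p * μ ((n:ℝ) + 1) ^ p) := by
      rw [ENNReal.ofReal_tsum_of_nonneg
        (fun n => by have := (hμpos ((n:ℝ)+1)).le; positivity) hcp]
      refine tsum_congr fun n => ?_
      rw [hAAdef]
      simp only []
      rw [ENNReal.ofReal_rpow_of_nonneg
        (by have := (hμpos ((n:ℝ)+1)).le; positivity) hp0,
        Real.mul_rpow (norm_nonneg _) (hμpos _).le]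
    calc ∑' m, ENNReal.ofReal (‖(inner ℂ y (gd m) : ℂ)‖ ^ p * μ ((m:ℝ)+1) ^ p)
        = ∑' m, (ENNReal.ofReal (‖(inner ℂ y (gd m):ℂ)‖ * μ ((m:ℝ)+1)))^p := tsum_congr hterm
      _ ≤ ∑' m, (ENNReal.ofReal L * ∑' n, w2 m n * AA n)^p :=
          ENNReal.tsum_le_tsum fun m => ENNReal.rpow_le_rpow (claim1 m) hp0
      _ ≤ ∑' m, ((ENNReal.ofReal L)^p * W^(p-1)) * ∑' n, w2 m n * (AA n)^p := by
          refine ENNReal.tsum_le_tsum fun m => ?_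
          rw [ENNReal.mul_rpow_of_nonneg _ _ hp0, mul_assoc]
          refine mul_le_mul_right ?_ _
          refine le_trans (jensenE (w2 m) AA hp) ?_
          exact mul_le_mul_left (ENNReal.rpow_le_rpow (hrow m) (by linarith)) _
      _ = ((ENNReal.ofReal L)^p * W^(p-1)) * ∑' m, ∑' n, w2 m n * (AA n)^p :=
          ENNReal.tsum_mul_left
      _ = ((ENNReal.ofReal L)^p * W^(p-1)) * ∑' n, (∑' m, w2 m n) * (AA n)^p := by
          rw [ENNReal.tsum_comm]
          congr 1
          exact tsum_congr fun n => ENNReal.tsum_mul_right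
      _ ≤ ((ENNReal.ofReal L)^p * W^(p-1)) * ∑' n, W * (AA n)^p := by
          refine mul_le_mul_right (ENNReal.tsum_le_tsum fun n => ?_) _
          exact mul_le_mul_left (hcol n) _
      _ = ((ENNReal.ofReal L)^p * (W^(p-1) * W)) * ∑' n, (AA n)^p := by
          rw [ENNReal.tsum_mul_left]
          ring
      _ = ENNReal.ofReal (K ^ p * ∑' n : ℕ, ‖c n‖ ^ p * μ ((n:ℝ) + 1) ^ p) := by
          have hWp : W^(p-1) * W = W^p := by
            nth_rewrite 2 [← ENNReal.rpow_one W]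
            rw [← ENNReal.rpow_add_of_nonneg _ _ (by linarith) zero_le_one]
            norm_num
          rw [hWp, ← ENNReal.mul_rpow_of_nonneg _ _ hp0, hAAp]
          have hLW : ENNReal.ofReal L * W = ENNReal.ofReal K := by
            rw [hKdef, ENNReal.ofReal_mul hL0.le, ENNReal.ofReal_toReal hWne]
          rw [hLW, ENNReal.ofReal_rpow_of_nonneg (by positivity) hp0,
            ← ENNReal.ofReal_mul (by positivity)]
  -- conversions
  have hterm_nonneg : ∀ m : ℕ, 0 ≤ ‖(inner ℂ y (gd m) : ℂ)‖ ^ p * μ ((m:ℝ)+1) ^ p := by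
    intro m
    have := (hμpos ((m:ℝ)+1)).le
    positivity
  have hfin : ∑' m, ENNReal.ofReal (‖(inner ℂ y (gd m) : ℂ)‖ ^ p * μ ((m:ℝ)+1) ^ p) ≠ ⊤ :=
    ne_top_of_le_ne_top ENNReal.ofReal_ne_top main
  have hsum2 : Summable (fun m : ℕ => ‖(inner ℂ y (gd m) : ℂ)‖ ^ p * μ ((m:ℝ) + 1) ^ p) := by
    have := ENNReal.summable_toReal hfin
    refine this.congr fun m => ?_
    rw [ENNReal.toReal_ofReal (hterm_nonneg m)]
  refine ⟨hsum2, ?_⟩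
  have hS0 : 0 ≤ ∑' n : ℕ, ‖c n‖ ^ p * μ ((n:ℝ)+1) ^ p :=
    tsum_nonneg fun n => by have := (hμpos ((n:ℝ)+1)).le; positivity
  rw [← ENNReal.ofReal_le_ofReal_iff (mul_nonneg (Real.rpow_nonneg (by positivity) p) hS0),
    ENNReal.ofReal_tsum_of_nonneg hterm_nonneg hsum2]
  exact main
end

section
/- Let H be a complex Hilbert space with orthonormal (Hilbert) basis (h_n)_{n≥1}. Let r be a positive integer, and for i = 1, …, r let ε_i ≥ 0 and let (a^i_n)_{n≥1} be complex sequences satisfying |a^i_n| ≤ ε_i for all n ≥ 2, Σ_{i=1}^r |a^i_1| ≤ 1, and Σ_{i=1}^r ε_i < 1. Then there exists a bounded bijective linear operator U on H with U h_n = h_n + Σ_{i=1}^r a^i_n h_{n+i} for every n; in particular, the sequence (e_n)_{n≥1} with e_n := h_n + Σ_{i=1}^r a^i_n h_{n+i} is a Riesz basis for H. Moreover, ‖U f‖ ≤ 3‖f‖ for all f ∈ H. -/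
open scoped InnerProductSpace ENNReal

lemma aux_shift {H : Type*} [NormedAddCommGroup H] [InnerProductSpace ℂ H] [CompleteSpace H]
    (h : HilbertBasis ℕ ℂ H) (b : ℕ → ℂ) (C : ℝ) (hb : ∀ n, ‖b n‖ ≤ C) (k : ℕ) :
    ∃ T : H →L[ℂ] H, (∀ n, T (h n) = b n • h (n + k)) ∧ (∀ f, ‖T f‖ ≤ C * ‖f‖) ∧
      (∀ f : H, HasSum (fun n => (b n * h.repr f n) • h (n + k)) (T f)) := by
  have hC : 0 ≤ C := le_trans (norm_nonneg _) (hb 0)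
  have hinj : Function.Injective (fun n : ℕ => n + k) := fun m n hmn => by simpa using hmn
  have hon : Orthonormal ℂ (fun n : ℕ => h (n + k)) := h.orthonormal.comp _ hinj
  have hV := hon.orthogonalFamily
  set J := hV.linearIsometry with hJ
  have ht2 : (2 : ℝ≥0∞).toReal = 2 := by norm_num
  have hpos : (0:ℝ) < (2 : ℝ≥0∞).toReal := by rw [ht2]; norm_num
  have hsum : ∀ f : H, Summable fun n => ‖h.repr f n‖ ^ (2 : ℝ≥0∞).toReal :=
    fun f => (lp.memℓp (h.repr f)).summable hpos
  have hle : ∀ (f : H) (n : ℕ), ‖b n * h.repr f n‖ ^ (2 : ℝ≥0∞).toReal ≤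
      C ^ (2 : ℝ≥0∞).toReal * ‖h.repr f n‖ ^ (2 : ℝ≥0∞).toReal := by
    intro f n
    rw [← Real.mul_rpow hC (norm_nonneg _)]
    refine Real.rpow_le_rpow (norm_nonneg _) ?_ hpos.le
    calc ‖b n * h.repr f n‖ = ‖b n‖ * ‖h.repr f n‖ := norm_mul _ _
      _ ≤ C * ‖h.repr f n‖ := by
          exact mul_le_mul_of_nonneg_right (hb n) (norm_nonneg _)
  have hmem : ∀ f : H, Memℓp (fun n => b n * h.repr f n) 2 := by
    intro f
    apply memℓp_gen
    exact Summable.of_nonneg_of_le (fun n => Real.rpow_nonneg (norm_nonneg _) _)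
      (hle f) ((hsum f).mul_left _)
  let Dlin : H →ₗ[ℂ] lp (fun _ : ℕ => ℂ) 2 :=
    { toFun := fun f => ⟨fun n => b n * h.repr f n, hmem f⟩
      map_add' := fun f g => by
        apply lp.ext
        funext n
        simp [mul_add]
        rfl
      map_smul' := fun c f => by
        apply lp.ext
        funext n
        simp [lp.coeFn_smul]
        ring }
  have hDb : ∀ f : H, ‖Dlin f‖ ≤ C * ‖f‖ := by
    intro f
    refine lp.norm_le_of_tsum_le hpos (mul_nonneg hC (norm_nonneg _)) ?_
    have h1 : ∑' n, ‖(Dlin f : ∀ _ : ℕ, ℂ) n‖ ^ (2 : ℝ≥0∞).toReal ≤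
        C ^ (2 : ℝ≥0∞).toReal * ∑' n, ‖h.repr f n‖ ^ (2 : ℝ≥0∞).toReal := by
      rw [← tsum_mul_left]
      exact Summable.tsum_le_tsum (hle f)
        (Summable.of_nonneg_of_le (fun n => Real.rpow_nonneg (norm_nonneg _) _)
          (hle f) ((hsum f).mul_left _)) ((hsum f).mul_left _)
    have h2 : ∑' n, ‖h.repr f n‖ ^ (2 : ℝ≥0∞).toReal = ‖f‖ ^ (2 : ℝ≥0∞).toReal := by
      rw [← lp.norm_rpow_eq_tsum hpos, h.repr.norm_map]
    rw [Real.mul_rpow hC (norm_nonneg _)]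
    calc ∑' n, ‖(Dlin f : ∀ _ : ℕ, ℂ) n‖ ^ (2 : ℝ≥0∞).toReal
        ≤ C ^ (2 : ℝ≥0∞).toReal * ∑' n, ‖h.repr f n‖ ^ (2 : ℝ≥0∞).toReal := h1
      _ = C ^ (2 : ℝ≥0∞).toReal * ‖f‖ ^ (2 : ℝ≥0∞).toReal := by rw [h2]
  let D : H →L[ℂ] lp (fun _ : ℕ => ℂ) 2 := Dlin.mkContinuous C hDb
  refine ⟨J.toContinuousLinearMap.comp D, ?_, ?_, ?_⟩
  · intro n
    have hD : D (h n) = lp.single 2 n (b n) := by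
      apply lp.ext
      funext m
      have : h.repr (h n) = lp.single 2 n 1 := h.repr_self n
      show b m * h.repr (h n) m = _
      rw [this]
      rcases eq_or_ne m n with rfl | hmn
      · simp [lp.single_apply_self]
      · simp [lp.single_apply_ne _ _ _ hmn, Pi.single_apply, hmn]
    show J (D (h n)) = b n • h (n + k)
    rw [hD, hV.linearIsometry_apply_single, LinearIsometry.toSpanSingleton_apply]
  · intro f
    show ‖J (D f)‖ ≤ C * ‖f‖
    rw [J.norm_map]
    exact hDb f
  · intro f
    have := hV.hasSum_linearIsometry (D f)
    exact this

/-- Construction of a Riesz basis as a perturbation of an orthonormal basis: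
with `|a^i_n| ≤ ε_i` for `n ≥ 2` (here 0-indexed: for indices `n ≥ 1`),
`Σ_i |a^i_1| ≤ 1` (here the index `0` term), and `Σ_i ε_i < 1`, the operator
`U h_n = h_n + Σ_{i=1}^r a^i_n h_{n+i}` is a bounded bijection on `H` with
`‖U f‖ ≤ 3 ‖f‖`; in particular `(e_n) = (U h_n)` is a Riesz basis for `H`. -/
theorem stmt_19 {H : Type*} [NormedAddCommGroup H] [InnerProductSpace ℂ H]
    [CompleteSpace H]
    (h : HilbertBasis ℕ ℂ H) (r : ℕ) (hr : 1 ≤ r)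
    (ε : Fin r → ℝ) (hε : ∀ i, 0 ≤ ε i)
    (a : Fin r → ℕ → ℂ)
    (ha : ∀ i, ∀ n : ℕ, 1 ≤ n → ‖a i n‖ ≤ ε i)
    (ha1 : ∑ i, ‖a i 0‖ ≤ 1)
    (hε1 : ∑ i, ε i < 1) :
    ∃ U : H →L[ℂ] H, Function.Bijective U ∧
      (∀ n : ℕ, U (h n) = h n + ∑ i : Fin r, a i n • h (n + (i:ℕ) + 1)) ∧
      (∀ f : H, ‖U f‖ ≤ 3 * ‖f‖) := by
  classical
  have haux : ∀ i : Fin r, ∃ T : H →L[ℂ] H,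
      (∀ n, T (h n) = (if n = 0 then 0 else a i n) • h (n + ((i : ℕ) + 1))) ∧
      (∀ f, ‖T f‖ ≤ ε i * ‖f‖) ∧
      (∀ f : H, HasSum
        (fun n => ((if n = 0 then 0 else a i n) * h.repr f n) • h (n + ((i : ℕ) + 1))) (T f)) := by
    intro i
    apply aux_shift h (fun n => if n = 0 then 0 else a i n) (ε i) ?_ ((i : ℕ) + 1)
    intro n
    by_cases hn : n = 0
    · simpa [hn] using hε i
    · simpa [hn] using ha i n (Nat.one_le_iff_ne_zero.mpr hn)
  choose T hT1 hT2 hT3 using haux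
  set S : H →L[ℂ] H := ∑ i, T i with hS
  have hSapp : ∀ f, S f = ∑ i, T i f := by
    intro f; rw [hS]; simp [ContinuousLinearMap.sum_apply]
  have hSf : ∀ f, ‖S f‖ ≤ (∑ i, ε i) * ‖f‖ := by
    intro f
    calc ‖S f‖ = ‖∑ i, T i f‖ := by rw [hSapp]
      _ ≤ ∑ i, ‖T i f‖ := norm_sum_le _ _
      _ ≤ ∑ i, ε i * ‖f‖ := Finset.sum_le_sum (fun i _ => hT2 i f)
      _ = (∑ i, ε i) * ‖f‖ := by rw [Finset.sum_mul]
  have hεsum : (0:ℝ) ≤ ∑ i, ε i := Finset.sum_nonneg fun i _ => hε i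
  have hSnorm : ‖S‖ < 1 :=
    lt_of_le_of_lt (ContinuousLinearMap.opNorm_le_bound _ hεsum hSf) hε1
  have hSinner : ∀ g : H, ⟪h 0, S g⟫_ℂ = 0 := by
    intro g
    have hTi : ∀ i : Fin r, ⟪h 0, T i g⟫_ℂ = 0 := by
      intro i
      have hs := (innerSL ℂ (h 0)).hasSum (hT3 i g)
      have hz : (fun n : ℕ =>
          (innerSL ℂ (h 0)) (((if n = 0 then 0 else a i n) * h.repr g n) • h (n + ((i : ℕ) + 1))))
          = fun _ => (0 : ℂ) := by
        funext n
        rw [innerSL_apply_apply, inner_smul_right,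
          h.orthonormal.2 (by omega : (0 : ℕ) ≠ n + ((i : ℕ) + 1)), mul_zero]
      rw [hz] at hs
      exact hs.unique hasSum_zero
    rw [hSapp, inner_sum]
    exact Finset.sum_eq_zero fun i _ => hTi i
  set w : H := ∑ i : Fin r, a i 0 • h ((i : ℕ) + 1) with hw
  have hwinner : ⟪h 0, w⟫_ℂ = 0 := by
    rw [hw, inner_sum]
    refine Finset.sum_eq_zero fun i _ => ?_
    rw [inner_smul_right, h.orthonormal.2 (by omega : (0 : ℕ) ≠ (i : ℕ) + 1), mul_zero]
  have hwnorm : ‖w‖ ≤ 1 := by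
    calc ‖w‖ ≤ ∑ i, ‖a i 0 • h ((i : ℕ) + 1)‖ := norm_sum_le _ _
      _ = ∑ i, ‖a i 0‖ := by
          refine Finset.sum_congr rfl fun i _ => ?_
          rw [norm_smul, h.orthonormal.1, mul_one]
      _ ≤ 1 := ha1
  set R : H →L[ℂ] H := (innerSL ℂ (h 0)).smulRight w with hR
  have hRapply : ∀ f, R f = ⟪h 0, f⟫_ℂ • w := by
    intro f; rw [hR, ContinuousLinearMap.smulRight_apply, innerSL_apply_apply]
  have hRnorm : ∀ f, ‖R f‖ ≤ ‖f‖ := by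
    intro f
    rw [hRapply, norm_smul]
    calc ‖⟪h 0, f⟫_ℂ‖ * ‖w‖ ≤ (‖h 0‖ * ‖f‖) * 1 :=
          mul_le_mul (norm_inner_le_norm _ _) hwnorm (norm_nonneg _)
            (by positivity)
      _ = ‖f‖ := by rw [h.orthonormal.1, one_mul, mul_one]
  have hneg : ‖-S‖ < 1 := by rwa [norm_neg]
  set u1 : (H →L[ℂ] H)ˣ := Units.oneSub (-S) hneg with hu1
  have hu1val : (u1 : H →L[ℂ] H) = 1 + S := by
    show (1 : H →L[ℂ] H) - (-S) = 1 + S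
    rw [sub_neg_eq_add]
  set v : H := (↑u1⁻¹ : H →L[ℂ] H) w with hv
  have h1Sv : (1 + S) v = w := by
    rw [← hu1val, hv, ← ContinuousLinearMap.mul_apply, u1.mul_inv,
      ContinuousLinearMap.one_apply]
  have hvinner : ⟪h 0, v⟫_ℂ = 0 := by
    have hveq : v = w - S v := by
      have h1 : v + S v = w := by
        have := h1Sv
        rwa [ContinuousLinearMap.add_apply, ContinuousLinearMap.one_apply] at this
      exact eq_sub_of_add_eq h1
    rw [hveq, inner_sub_right, hwinner, hSinner, sub_zero]
  set V : H →L[ℂ] H := (innerSL ℂ (h 0)).smulRight v with hVdef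
  have hVapp : ∀ f, V f = ⟪h 0, f⟫_ℂ • v := by
    intro f; rw [hVdef, ContinuousLinearMap.smulRight_apply, innerSL_apply_apply]
  have hVV : V * V = 0 := by
    ext f
    rw [ContinuousLinearMap.mul_apply, ContinuousLinearMap.zero_apply, hVapp, hVapp,
      inner_smul_right, hvinner, mul_zero, zero_smul]
  have hval_inv : (1 + V) * (1 - V) = 1 := by
    have hexp : (1 + V) * (1 - V) = 1 - V * V := by noncomm_ring
    rw [hexp, hVV, sub_zero]
  have hinv_val : (1 - V) * (1 + V) = 1 := by
    have hexp : (1 - V) * (1 + V) = 1 - V * V := by noncomm_ring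
    rw [hexp, hVV, sub_zero]
  set u2 : (H →L[ℂ] H)ˣ := ⟨1 + V, 1 - V, hval_inv, hinv_val⟩ with hu2
  have hSV : (1 + S) * V = R := by
    ext f
    rw [ContinuousLinearMap.mul_apply, hVapp, map_smul, h1Sv, hRapply]
  have huval : (↑(u1 * u2) : H →L[ℂ] H) = 1 + S + R := by
    rw [Units.val_mul, hu1val]
    have hu2val : (↑u2 : H →L[ℂ] H) = 1 + V := rfl
    rw [hu2val]
    calc (1 + S) * (1 + V) = 1 + S + (1 + S) * V := by noncomm_ring
      _ = 1 + S + R := by rw [hSV]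
  refine ⟨1 + S + R, ?_, ?_, ?_⟩
  · rw [← huval]
    refine Function.bijective_iff_has_inverse.mpr ⟨(↑(u1 * u2)⁻¹ : H →L[ℂ] H), ?_, ?_⟩
    · intro x
      rw [← ContinuousLinearMap.mul_apply, (u1 * u2).inv_mul, ContinuousLinearMap.one_apply]
    · intro x
      rw [← ContinuousLinearMap.mul_apply, (u1 * u2).mul_inv, ContinuousLinearMap.one_apply]
  · intro n
    have happly : (1 + S + R) (h n) = h n + S (h n) + R (h n) := by
      rw [ContinuousLinearMap.add_apply, ContinuousLinearMap.add_apply,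
        ContinuousLinearMap.one_apply]
    rw [happly]
    rcases Nat.eq_zero_or_pos n with rfl | hn
    · have hS0 : S (h 0) = 0 := by
        rw [hSapp]
        refine Finset.sum_eq_zero fun i _ => ?_
        rw [hT1 i 0, if_pos rfl, zero_smul]
      have hR0 : R (h 0) = w := by
        rw [hRapply]
        have : ⟪h 0, h 0⟫_ℂ = 1 := by
          have h1 : ‖h 0‖ = 1 := h.orthonormal.1 0
          rw [inner_self_eq_norm_sq_to_K, h1]
          norm_num
        rw [this, one_smul]
      rw [hS0, hR0, add_zero, hw]
      simp [zero_add]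
    · have hn' : n ≠ 0 := by omega
      have hSn : S (h n) = ∑ i : Fin r, a i n • h (n + (i : ℕ) + 1) := by
        rw [hSapp]
        refine Finset.sum_congr rfl fun i _ => ?_
        rw [hT1 i n, if_neg hn', add_assoc]
      have hRn : R (h n) = 0 := by
        rw [hRapply, h.orthonormal.2 (by omega : (0 : ℕ) ≠ n), zero_smul]
      rw [hSn, hRn, add_zero]
  · intro f
    have happly : (1 + S + R) f = f + S f + R f := by
      rw [ContinuousLinearMap.add_apply, ContinuousLinearMap.add_apply,
        ContinuousLinearMap.one_apply]
    rw [happly]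
    have h1 : ‖f + S f + R f‖ ≤ ‖f‖ + ‖S f‖ + ‖R f‖ :=
      le_trans (norm_add_le _ _) (add_le_add_left (norm_add_le _ _) _)
    have h2 : ‖S f‖ ≤ 1 * ‖f‖ :=
      le_trans (hSf f) (mul_le_mul_of_nonneg_right hε1.le (norm_nonneg _))
    have h3 := hRnorm f
    have := norm_nonneg f
    linarith
end
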